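/- Degree principle for systems: Let n ≥ 1, d ≥ 1, and let F_1,…,F_m ∈ ℝ[x_1,…,x_n] be symmetric polynomials each of (total) degree at most d. Then there exists x ∈ ℝⁿ with F_1(x) = ⋯ = F_m(x) = 0 if and only if there exists y ∈ ℝⁿ with at most d distinct coordinates such that F_1(y) = ⋯ = F_m(y) = 0. -/

import Mathlib

open MvPolynomial Finset

private lemma eval_psum (n j : ℕ) (v : Fin n → ℝ) :
    eval v (psum (Fin n) ℝ j) = ∑ i, v i ^ j := by
  simp [psum]

private lemma esymm_hom (n k : ℕ) : (esymm (Fin n) ℝ k).IsHomogeneous k := by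
  rw [esymm]
  apply IsHomogeneous.sum
  intro t ht
  rw [mem_powersetCard] at ht
  have : (∑ _i ∈ t, 1) = k := by simp [ht.2]
  rw [← this]
  exact IsHomogeneous.prod t _ _ (fun i _ => isHomogeneous_X ℝ i)

private lemma hc_same {n e : ℕ} {φ : MvPolynomial (Fin n) ℝ} (h : φ.IsHomogeneous e) :
    homogeneousComponent e φ = φ := by
  ext d
  rw [coeff_homogeneousComponent]
  split_ifs with hd
  · rfl
  · exact (h.coeff_eq_zero hd).symm

private lemma hc_ne {n e e' : ℕ} {φ : MvPolynomial (Fin n) ℝ} (h : φ.IsHomogeneous e)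
    (hne : e ≠ e') : homogeneousComponent e' φ = 0 := by
  ext d
  rw [coeff_homogeneousComponent]
  split_ifs with hd
  · simp only [coeff_zero]
    exact h.coeff_eq_zero (by rw [hd]; exact fun h' => hne h'.symm)
  · rfl

/-- Newton transfer: equal power sums up to `d` give equal elementary symmetric up to `d`. -/
private lemma esymm_eval_eq (n d : ℕ) (x y : Fin n → ℝ)
    (h : ∀ j, 1 ≤ j → j ≤ d → eval x (psum (Fin n) ℝ j) = eval y (psum (Fin n) ℝ j)) :
    ∀ k, k ≤ d → eval x (esymm (Fin n) ℝ k) = eval y (esymm (Fin n) ℝ k) := by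
  intro k
  induction k using Nat.strong_induction_on with
  | _ k ih =>
    intro hkd
    rcases Nat.eq_zero_or_pos k with hk0 | hk1
    · subst hk0; simp
    have hx := congrArg (eval x) (mul_esymm_eq_sum (Fin n) ℝ k)
    have hy := congrArg (eval y) (mul_esymm_eq_sum (Fin n) ℝ k)
    simp only [map_mul, map_sum, map_pow, map_neg, map_one, map_natCast] at hx hy
    have hsum : ∑ a ∈ filter (fun a => a.1 < k) (Finset.HasAntidiagonal.antidiagonal k),
        (-1 : ℝ) ^ a.1 * eval x (esymm (Fin n) ℝ a.1) * eval x (psum (Fin n) ℝ a.2)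
        = ∑ a ∈ filter (fun a => a.1 < k) (Finset.HasAntidiagonal.antidiagonal k),
        (-1 : ℝ) ^ a.1 * eval y (esymm (Fin n) ℝ a.1) * eval y (psum (Fin n) ℝ a.2) := by
      refine Finset.sum_congr rfl ?_
      intro a ha
      rw [Finset.mem_filter, Finset.HasAntidiagonal.mem_antidiagonal] at ha
      have h1 : a.1 < k := ha.2
      have h2 : 1 ≤ a.2 := by omega
      have h3 : a.2 ≤ d := by omega
      rw [ih a.1 h1 (by omega), h a.2 h2 h3]
    rw [hsum] at hx
    have hk0' : (k : ℝ) ≠ 0 := Nat.cast_ne_zero.mpr (by omega)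
    exact mul_left_cancel₀ hk0' (hx.trans hy.symm)

private lemma eval_eq_of_psum_eq (n d : ℕ) (F : MvPolynomial (Fin n) ℝ) (hF : F.IsSymmetric)
    (hdeg : F.totalDegree ≤ d) (x y : Fin n → ℝ)
    (hp : ∀ j, 1 ≤ j → j ≤ d → eval x (psum (Fin n) ℝ j) = eval y (psum (Fin n) ℝ j)) :
    eval x F = eval y F := by
  classical
  obtain ⟨G, hG⟩ := esymmAlgHom_surjective (σ := Fin n) ℝ (n := n) (by simp) ⟨F, hF⟩
  have hFG : F = aeval (fun i : Fin n => esymm (Fin n) ℝ ((i : ℕ) + 1)) G := by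
    have := congrArg Subtype.val hG
    rw [esymmAlgHom_apply] at this
    exact this.symm
  set W : (Fin n →₀ ℕ) → ℕ := fun t => t.sum (fun j e => ((j : ℕ) + 1) * e) with hW
  set term : (Fin n →₀ ℕ) → MvPolynomial (Fin n) ℝ := fun t =>
    C (coeff t G) * t.prod (fun j e => esymm (Fin n) ℝ ((j : ℕ) + 1) ^ e) with hterm
  have hhom : ∀ t, (term t).IsHomogeneous (W t) := by
    intro t
    have h1 : (t.prod (fun j e => esymm (Fin n) ℝ ((j : ℕ) + 1) ^ e)).IsHomogeneous (W t) :=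
      IsHomogeneous.prod t.support _ (fun j => ((j : ℕ) + 1) * t j)
        (fun j _ => (esymm_hom n ((j : ℕ) + 1)).pow _)
    have h2 := (isHomogeneous_C (Fin n) (coeff t G)).mul h1
    rw [zero_add] at h2
    exact h2
  have hFsum : F = ∑ t ∈ G.support, term t := by
    conv_lhs => rw [hFG, G.as_sum]
    rw [map_sum]
    refine Finset.sum_congr rfl (fun t _ => ?_)
    rw [aeval_monomial]
    rfl
  -- F is the sum of its terms of weight at most d
  have hFsum' : F = ∑ t ∈ G.support.filter (fun t => W t ≤ d), term t := by
    have hcomp : ∀ e, homogeneousComponent e F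
        = ∑ t ∈ G.support.filter (fun t => W t = e), term t := by
      intro e
      rw [hFsum, map_sum, Finset.sum_filter]
      refine Finset.sum_congr rfl (fun t _ => ?_)
      by_cases h : W t = e
      · rw [if_pos h, ← h, hc_same (hhom t)]
      · rw [if_neg h, hc_ne (hhom t) h]
    have h1 : F = ∑ e ∈ Finset.range (d + 1), homogeneousComponent e F := by
      rw [← Finset.sum_subset (Finset.range_subset_range.mpr (by omega) :
          Finset.range (F.totalDegree + 1) ⊆ Finset.range (d + 1))
          (fun e _ he => homogeneousComponent_eq_zero e F (by
            simp only [Finset.mem_range] at he ⊢; omega)),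
        sum_homogeneousComponent]
    rw [h1]
    have h2 : ∀ e ∈ Finset.range (d + 1),
        (G.support.filter (fun t => W t = e))
        = ((G.support.filter (fun t => W t ≤ d)).filter (fun t => W t = e)) := by
      intro e he
      simp only [Finset.mem_range] at he
      rw [Finset.filter_filter]
      refine Finset.filter_congr (fun t _ => ?_)
      constructor
      · intro h; exact ⟨by omega, h⟩
      · exact fun h => h.2
    calc ∑ e ∈ Finset.range (d + 1), homogeneousComponent e F
        = ∑ e ∈ Finset.range (d + 1),
            ∑ t ∈ (G.support.filter (fun t => W t ≤ d)).filter (fun t => W t = e), term t := by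
          refine Finset.sum_congr rfl (fun e he => ?_)
          rw [hcomp e, h2 e he]
      _ = ∑ t ∈ G.support.filter (fun t => W t ≤ d), term t := by
          refine Finset.sum_fiberwise_of_maps_to (fun t ht => ?_) _
          simp only [Finset.mem_filter] at ht
          simp only [Finset.mem_range]
          omega
  -- now evaluate
  rw [hFsum']
  rw [map_sum, map_sum]
  refine Finset.sum_congr rfl (fun t ht => ?_)
  simp only [Finset.mem_filter] at ht
  rw [hterm]
  simp only [map_mul, eval_C]
  congr 1
  rw [map_finsuppProd, map_finsuppProd]
  refine Finsupp.prod_congr (fun j hj => ?_)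
  rw [map_pow, map_pow]
  have hj1 : (j : ℕ) + 1 ≤ d := by
    have htj : 1 ≤ t j := Nat.one_le_iff_ne_zero.mpr (Finsupp.mem_support_iff.mp hj)
    have hle : ((j : ℕ) + 1) * t j ≤ W t := by
      rw [hW]
      exact Finset.single_le_sum (f := fun i : Fin n => ((i : ℕ) + 1) * t i)
        (fun i _ => Nat.zero_le _) hj
    have := ht.2
    nlinarith [Nat.one_le_iff_ne_zero.mpr (Finsupp.mem_support_iff.mp hj)]
  rw [esymm_eval_eq n d x y hp ((j : ℕ) + 1) hj1]

private lemma exists_few_values (n d : ℕ) (hn : 1 ≤ n) (hd : 2 ≤ d) (x : Fin n → ℝ) :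
    ∃ y : Fin n → ℝ, (Finset.univ.image y).card ≤ d ∧
      ∀ j, 1 ≤ j → j ≤ d → ∑ i, y i ^ j = ∑ i, x i ^ j := by
  classical
  set V : Set (Fin n → ℝ) := {y | ∀ j ∈ Finset.Icc 1 d, ∑ i, y i ^ j = ∑ i, x i ^ j} with hV
  have hxV : x ∈ V := fun j _ => rfl
  have hVclosed : IsClosed V := by
    have : V = ⋂ j ∈ Finset.Icc 1 d, {y : Fin n → ℝ | ∑ i, y i ^ j = ∑ i, x i ^ j} := by
      ext y; simp [hV]
    rw [this]
    refine isClosed_biInter (fun j _ => isClosed_eq ?_ continuous_const)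
    exact continuous_finset_sum _ (fun i _ => (continuous_apply i).pow j)
  set R : ℝ := Real.sqrt (∑ i, x i ^ 2) with hR
  have hsub : V ⊆ Set.univ.pi (fun _ : Fin n => Set.Icc (-R) R) := by
    intro y hy
    intro i _
    have h2 : ∑ i, y i ^ 2 = ∑ i, x i ^ 2 := hy 2 (Finset.mem_Icc.mpr ⟨by omega, hd⟩)
    have hle : y i ^ 2 ≤ ∑ i, x i ^ 2 := by
      rw [← h2]
      exact Finset.single_le_sum (fun i _ => sq_nonneg (y i)) (Finset.mem_univ i)
    have habs : |y i| ≤ R := by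
      rw [← Real.sqrt_sq_eq_abs, hR]
      exact Real.sqrt_le_sqrt hle
    exact abs_le.mp habs
  have hVcomp : IsCompact V :=
    (isCompact_univ_pi (fun _ => isCompact_Icc)).of_isClosed_subset hVclosed hsub
  have hcont : Continuous (fun y : Fin n → ℝ => ∑ i, y i ^ (d + 1)) :=
    continuous_finset_sum _ (fun i _ => (continuous_apply i).pow _)
  obtain ⟨y, hyV, hymax⟩ := hVcomp.exists_isMaxOn ⟨x, hxV⟩ hcont.continuousOn
  refine ⟨y, ?_, fun j hj1 hj2 => hyV j (Finset.mem_Icc.mpr ⟨hj1, hj2⟩)⟩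
  by_contra hcard
  push_neg at hcard
  obtain ⟨s, hs_sub, hs_card⟩ := Finset.exists_subset_card_eq hcard
  set t : Fin (d + 1) → ℝ := fun b => ((s.orderIsoOfFin hs_card) b : ℝ) with htdef
  have ht_inj : Function.Injective t := fun a b hab =>
    (s.orderIsoOfFin hs_card).injective (Subtype.ext hab)
  have ht_mem : ∀ b, t b ∈ s := fun b => ((s.orderIsoOfFin hs_card) b).2
  set cl : Fin n → Option (Fin (d + 1)) := fun i =>
    if h : y i ∈ s then some ((s.orderIsoOfFin hs_card).symm ⟨y i, h⟩) else none with hcldef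
  have hcl1 : ∀ i b, cl i = some b → y i = t b := by
    intro i b h
    rw [hcldef] at h
    dsimp only at h
    by_cases h' : y i ∈ s
    · rw [dif_pos h'] at h
      have hb : (s.orderIsoOfFin hs_card).symm ⟨y i, h'⟩ = b := Option.some_injective _ h
      rw [htdef, ← hb]
      simp
    · rw [dif_neg h'] at h
      exact absurd h (by simp)
  have hcl2 : ∀ b, ∃ i, cl i = some b := by
    intro b
    have : t b ∈ Finset.univ.image y := hs_sub (ht_mem b)
    obtain ⟨i, _, hi⟩ := Finset.mem_image.mp this
    refine ⟨i, ?_⟩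
    rw [hcldef]
    dsimp only
    rw [dif_pos (hi ▸ ht_mem b)]
    congr 1
    rw [OrderIso.symm_apply_eq]
    exact Subtype.ext hi
  set ℓ : Fin n → ((Fin (d + 1) → ℝ) →L[ℝ] ℝ) := fun i =>
    Option.elim (cl i) 0 (fun b => ContinuousLinearMap.proj b) with hldef
  have hl0 : ∀ i, ℓ i (0 : Fin (d + 1) → ℝ) = 0 := fun i => map_zero _
  have hlsome : ∀ i b, cl i = some b → ∀ u, ℓ i u = u b := by
    intro i b h u
    rw [hldef]
    dsimp only
    rw [h]
    rfl
  have hlnone : ∀ i, cl i = none → ℓ i = 0 := by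
    intro i h
    rw [hldef]
    dsimp only
    rw [h]
    rfl
  set φ : (Fin (d + 1) → ℝ) → (Fin (d + 1) → ℝ) :=
    fun u j => ∑ i, (y i + ℓ i u) ^ ((j : ℕ) + 1) with hφdef
  have hφ0 : ∀ j : Fin (d + 1), φ 0 j = ∑ i, y i ^ ((j : ℕ) + 1) := by
    intro j
    rw [hφdef]
    dsimp only
    refine Finset.sum_congr rfl (fun i _ => ?_)
    rw [hl0 i, add_zero]
  set mc : Fin (d + 1) → ℕ := fun b => (Finset.univ.filter (fun i => cl i = some b)).card
    with hmcdef
  have hmc : ∀ b, 0 < mc b := by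
    intro b
    obtain ⟨i, hi⟩ := hcl2 b
    exact Finset.card_pos.mpr ⟨i, Finset.mem_filter.mpr ⟨Finset.mem_univ i, hi⟩⟩
  set M : Matrix (Fin (d + 1)) (Fin (d + 1)) ℝ :=
    Matrix.of fun j b => (((j : ℕ) + 1 : ℝ)) * mc b * t b ^ (j : ℕ) with hMdef
  have hdet : IsUnit M.det := by
    have hM : M = (Matrix.diagonal fun j : Fin (d + 1) => (((j : ℕ) + 1 : ℝ)))
        * (Matrix.vandermonde t).transpose * Matrix.diagonal (fun b => (mc b : ℝ)) := by
      ext j b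
      simp [hMdef, Matrix.of_apply, Matrix.mul_diagonal, Matrix.diagonal_mul,
        Matrix.transpose_apply, Matrix.vandermonde]
      ring
    rw [hM, Matrix.det_mul, Matrix.det_mul, Matrix.det_diagonal, Matrix.det_diagonal,
      Matrix.det_transpose]
    rw [mul_assoc]
    refine IsUnit.mul (IsUnit.mk0 _ ?_) (IsUnit.mul (IsUnit.mk0 _ ?_) (IsUnit.mk0 _ ?_))
    · rw [Finset.prod_ne_zero_iff]
      intro j _
      positivity
    · exact Matrix.det_vandermonde_ne_zero_iff.mpr ht_inj
    · rw [Finset.prod_ne_zero_iff]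
      intro b _
      exact Nat.cast_ne_zero.mpr (Nat.pos_iff_ne_zero.mp (hmc b))
  letI hinv : Invertible M := M.invertibleOfIsUnitDet hdet
  set E : (Fin (d + 1) → ℝ) ≃ₗ[ℝ] (Fin (d + 1) → ℝ) := M.toLinearEquiv' hinv with hEdef
  set CLE := E.toContinuousLinearEquiv with hCLEdef
  have hphi : HasStrictFDerivAt φ (CLE : (Fin (d + 1) → ℝ) →L[ℝ] (Fin (d + 1) → ℝ)) 0 := by
    apply hasStrictFDerivAt_pi''
    intro j
    have hL : ∀ i : Fin n, HasStrictFDerivAt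
        (fun u : Fin (d + 1) → ℝ => (y i + ℓ i u) ^ ((j : ℕ) + 1))
        ((((((j : ℕ) + 1 : ℕ)) : ℝ) * y i ^ (j : ℕ)) • ℓ i) 0 := by
      intro i
      have h0 : HasStrictDerivAt (fun z : ℝ => y i + z) 1 (ℓ i 0) :=
        (hasStrictDerivAt_id (ℓ i 0)).const_add (y i)
      have h1 := (hasStrictDerivAt_pow ((j : ℕ) + 1) (y i + ℓ i 0)).comp (ℓ i 0) h0
      have h2 := h1.comp_hasStrictFDerivAt 0 ((ℓ i).hasStrictFDerivAt)
      simp only [hl0 i, add_zero, mul_one, Nat.add_sub_cancel, Function.comp_def] at h2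
      exact h2
    have hsum := HasStrictFDerivAt.sum (x := (0 : Fin (d + 1) → ℝ)) (u := Finset.univ)
      (A := fun i (u : Fin (d + 1) → ℝ) => (y i + ℓ i u) ^ ((j : ℕ) + 1))
      (A' := fun i => (((((j : ℕ) + 1 : ℕ)) : ℝ) * y i ^ (j : ℕ)) • ℓ i) (fun i _ => hL i)
    have heq : (ContinuousLinearMap.proj j).comp
          (CLE : (Fin (d + 1) → ℝ) →L[ℝ] (Fin (d + 1) → ℝ))
        = ∑ i : Fin n, (((((j : ℕ) + 1 : ℕ)) : ℝ) * y i ^ (j : ℕ)) • ℓ i := by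
      apply ContinuousLinearMap.ext
      intro u
      rw [ContinuousLinearMap.comp_apply, ContinuousLinearMap.proj_apply,
        ContinuousLinearMap.sum_apply]
      have hCLEu : (CLE : (Fin (d + 1) → ℝ) →L[ℝ] (Fin (d + 1) → ℝ)) u = M.mulVec u := by
        rw [hCLEdef]
        have h3 : ((E.toContinuousLinearEquiv :
            (Fin (d + 1) → ℝ) →L[ℝ] (Fin (d + 1) → ℝ)) u) = E u := by
          simp
        rw [h3, hEdef]
        have h4 := DFunLike.congr_fun (Matrix.toLinearEquiv'_apply M hinv) u
        rw [Matrix.toLin'_apply] at h4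
        exact h4
      rw [hCLEu]
      have h5 : M.mulVec u j = ∑ b, M j b * u b := by
        simp [Matrix.mulVec, dotProduct]
      rw [h5]
      have h6 : ∀ i : Fin n, (((((j : ℕ) + 1 : ℕ)) : ℝ) * y i ^ (j : ℕ)) • ℓ i u
          = (((((j : ℕ) + 1 : ℕ)) : ℝ) * y i ^ (j : ℕ)) * ℓ i u := fun i => rfl
      simp only [ContinuousLinearMap.smul_apply, smul_eq_mul]
      rw [← Finset.sum_fiberwise Finset.univ cl
        (fun i => (((((j : ℕ) + 1 : ℕ)) : ℝ) * y i ^ (j : ℕ)) * ℓ i u), Fintype.sum_option]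
      have hnone : ∑ i ∈ Finset.univ.filter (fun i => cl i = none),
          (((((j : ℕ) + 1 : ℕ)) : ℝ) * y i ^ (j : ℕ)) * ℓ i u = 0 := by
        refine Finset.sum_eq_zero (fun i hi => ?_)
        rw [Finset.mem_filter] at hi
        rw [hlnone i hi.2]
        simp
      rw [hnone, zero_add]
      refine Finset.sum_congr rfl (fun b _ => ?_)
      have hfib : ∑ i ∈ Finset.univ.filter (fun i => cl i = some b),
          (((((j : ℕ) + 1 : ℕ)) : ℝ) * y i ^ (j : ℕ)) * ℓ i u
          = ∑ _i ∈ Finset.univ.filter (fun i => cl i = some b),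
          (((((j : ℕ) + 1 : ℕ)) : ℝ) * t b ^ (j : ℕ)) * u b := by
        refine Finset.sum_congr rfl (fun i hi => ?_)
        rw [Finset.mem_filter] at hi
        rw [hcl1 i b hi.2, hlsome i b hi.2 u]
      rw [hfib, Finset.sum_const, hMdef]
      have : (Finset.univ.filter (fun i => cl i = some b)).card = mc b := rfl
      rw [this]
      simp only [Matrix.of_apply, nsmul_eq_mul]
      push_cast
      ring
    rw [heq]
    convert hsum using 1
    funext u
    simp [hφdef, Finset.sum_apply]
  have hmap := hphi.map_nhds_eq_of_equiv
  have hrange : Set.range φ ∈ nhds (φ 0) := by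
    rw [← hmap]
    exact Filter.mem_map.mpr (by rw [Set.preimage_range]; exact Filter.univ_mem)
  obtain ⟨ε, hε, hball⟩ := Metric.mem_nhds_iff.mp hrange
  set z : Fin (d + 1) → ℝ := φ 0 + (ε / 2) • (Pi.single (Fin.last d) 1 : Fin (d + 1) → ℝ) with hzdef
  have hz : z ∈ Metric.ball (φ 0) ε := by
    rw [Metric.mem_ball, dist_eq_norm, hzdef, add_sub_cancel_left, norm_smul]
    have h1 : ‖(Pi.single (Fin.last d) 1 : Fin (d + 1) → ℝ)‖ ≤ 1 := by
      rw [pi_norm_le_iff_of_nonneg zero_le_one]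
      intro i
      by_cases h : i = Fin.last d
      · subst h; simp
      · simp [Pi.single_eq_of_ne h]
    have h2 : ‖ε / 2‖ = ε / 2 := by rw [Real.norm_eq_abs, abs_of_pos (by linarith)]
    nlinarith [norm_nonneg (Pi.single (Fin.last d) 1 : Fin (d + 1) → ℝ)]
  obtain ⟨u, hu⟩ := hball hz
  set y' : Fin n → ℝ := fun i => y i + ℓ i u with hy'def
  have hy'V : y' ∈ V := by
    intro j hj
    rw [Finset.mem_Icc] at hj
    set b : Fin (d + 1) := ⟨j - 1, by omega⟩ with hbdef
    have hb1 : (b : ℕ) + 1 = j := by simp [hbdef]; omega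
    have h1 : ∑ i, y' i ^ j = φ u b := by rw [hφdef]; dsimp only; rw [hb1]
    have hbne : b ≠ Fin.last d := by
      intro h
      have : (b : ℕ) = d := by rw [h]; rfl
      omega
    rw [h1, hu, hzdef]
    have : (φ 0 + (ε / 2) • (Pi.single (Fin.last d) 1 : Fin (d + 1) → ℝ)) b = φ 0 b := by
      simp [Pi.single_eq_of_ne hbne]
    rw [this, hφ0 b, hb1]
    exact hyV j (Finset.mem_Icc.mpr hj)
  have hlast : ∑ i, y' i ^ (d + 1) = (∑ i, y i ^ (d + 1)) + ε / 2 := by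
    have h1 : ∑ i, y' i ^ (d + 1) = φ u (Fin.last d) := by
      rw [hφdef]; dsimp only
      norm_num [Fin.last]
      rfl
    rw [h1, hu, hzdef]
    have : (φ 0 + (ε / 2) • (Pi.single (Fin.last d) 1 : Fin (d + 1) → ℝ)) (Fin.last d)
        = φ 0 (Fin.last d) + ε / 2 := by simp
    rw [this, hφ0 (Fin.last d)]
    norm_num [Fin.last]
  have hle : ∑ i, y' i ^ (d + 1) ≤ ∑ i, y i ^ (d + 1) := (isMaxOn_iff.mp hymax) y' hy'V
  linarith


/-- **Degree principle for systems.** Symmetric real polynomials `F 1, …, F m` of total degree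
at most `d` have a common real zero iff they have a common real zero with at most `d` distinct
coordinates. -/
theorem degree_principle_system (n d m : ℕ) (hn : 1 ≤ n) (hd : 1 ≤ d)
    (F : Fin m → MvPolynomial (Fin n) ℝ)
    (hF : ∀ i, MvPolynomial.IsSymmetric (F i))
    (hdeg : ∀ i, (F i).totalDegree ≤ d) :
    (∃ x : Fin n → ℝ, ∀ i, MvPolynomial.eval x (F i) = 0) ↔
      (∃ y : Fin n → ℝ, (Finset.univ.image y).card ≤ d ∧
        ∀ i, MvPolynomial.eval y (F i) = 0) := by
  haveI : Nonempty (Fin n) := ⟨⟨0, hn⟩⟩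
  constructor
  · rintro ⟨x, hx⟩
    have hn0 : (n : ℝ) ≠ 0 := Nat.cast_ne_zero.mpr (by omega)
    rcases Nat.lt_or_ge d 2 with hd1 | hd2
    · have hd1' : d = 1 := by omega
      subst hd1'
      refine ⟨fun _ => (∑ i, x i) / (n : ℝ), ?_, ?_⟩
      · rw [Finset.image_const Finset.univ_nonempty]
        simp
      · intro i
        have hp : ∀ j, 1 ≤ j → j ≤ 1 →
            eval (fun _ : Fin n => (∑ i, x i) / (n : ℝ)) (psum (Fin n) ℝ j)
            = eval x (psum (Fin n) ℝ j) := by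
          intro j hj1 hj2
          have : j = 1 := by omega
          subst this
          rw [eval_psum, eval_psum]
          simp only [pow_one, Finset.sum_const, Finset.card_univ, Fintype.card_fin,
            nsmul_eq_mul]
          rw [mul_div_cancel₀ _ hn0]
        rw [eval_eq_of_psum_eq n 1 (F i) (hF i) (hdeg i) _ x hp]
        exact hx i
    · obtain ⟨y, hcard, hpow⟩ := exists_few_values n d hn hd2 x
      refine ⟨y, hcard, fun i => ?_⟩
      have hp : ∀ j, 1 ≤ j → j ≤ d →
          eval y (psum (Fin n) ℝ j) = eval x (psum (Fin n) ℝ j) := by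
        intro j hj1 hj2
        rw [eval_psum, eval_psum]
        exact hpow j hj1 hj2
      rw [eval_eq_of_psum_eq n d (F i) (hF i) (hdeg i) y x hp]
      exact hx i
  · rintro ⟨y, _, hy⟩
    exact ⟨y, hy⟩
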